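/- Let μ ≥ 0, m ≥ 0, and ρ(t) = t^{(μ+1)/2} K_{(μ−1)/(2(m+1))}(t^{m+1}/(m+1)), where K_η is the modified Bessel function of the second kind. Then ρ is twice differentiable on [1,∞) and solves the ODE ρ''(t) − t^{2m} ρ(t) − d/dt( (μ/t) ρ(t) ) = 0 for all t ≥ 1. -/

import Mathlib

noncomputable def besselK (η y : ℝ) : ℝ :=
  ∫ ζ in Set.Ioi (0:ℝ), Real.exp (-y * Real.cosh ζ) * Real.cosh (η * ζ)

noncomputable def phim (m t : ℝ) : ℝ := t ^ (m + 1) / (m + 1)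

noncomputable def rho (μ m t : ℝ) : ℝ :=
  t ^ ((μ + 1) / 2) * besselK ((μ - 1) / (2 * (m + 1))) (phim m t)

open Real MeasureTheory Set Filter intervalIntegral
open scoped Topology

/-- exponential bound -/
lemma bound_aux {b y : ℝ} (hb : 0 ≤ b) (hy : 0 < y) :
    ∃ C : ℝ, ∀ ζ : ℝ, 0 ≤ ζ → Real.exp (b * ζ) * Real.exp (-y * Real.cosh ζ) ≤ C * Real.exp (-ζ) := by
  set s : ℝ := (2 * (b + 1)) / y with hs
  have hs0 : 0 < s := by positivity
  refine ⟨Real.exp ((b+1) * (Real.log s - 1)), fun ζ hζ => ?_⟩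
  rw [← Real.exp_add, ← Real.exp_add]
  apply Real.exp_le_exp.2
  have h1 : Real.exp ζ / 2 ≤ Real.cosh ζ := by
    rw [Real.cosh_eq]
    have := Real.exp_pos (-ζ)
    linarith
  have h2 : s * (ζ - Real.log s + 1) ≤ Real.exp ζ := by
    have := Real.add_one_le_exp (ζ - Real.log s)
    have h3 : Real.exp (ζ - Real.log s) * s = Real.exp ζ := by
      rw [Real.exp_sub, Real.exp_log hs0]; field_simp
    calc s * (ζ - Real.log s + 1) ≤ s * Real.exp (ζ - Real.log s) := by
          apply mul_le_mul_of_nonneg_left _ hs0.le; linarith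
      _ = Real.exp ζ := by rw [mul_comm, h3]
  have h4 : (b + 1) * (ζ - Real.log s + 1) ≤ y * Real.cosh ζ := by
    have : y * (Real.exp ζ / 2) ≤ y * Real.cosh ζ := mul_le_mul_of_nonneg_left h1 hy.le
    have h5 : (b+1) * (ζ - Real.log s + 1) = (y/2) * (s * (ζ - Real.log s + 1)) := by
      rw [hs]; field_simp
    nlinarith [mul_le_mul_of_nonneg_left h2 (by positivity : (0:ℝ) ≤ y/2)]
  nlinarith

noncomputable def besselI (η y : ℝ) (n : ℕ) : ℝ :=
  ∫ ζ in Set.Ioi (0:ℝ), Real.cosh ζ ^ n * (Real.exp (-y * Real.cosh ζ) * Real.cosh (η * ζ))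

lemma pointwise_bound (η : ℝ) (n : ℕ) {y : ℝ} (hy : 0 < y) :
    ∃ C : ℝ, ∀ ζ : ℝ, 0 ≤ ζ →
      |Real.cosh ζ ^ n * (Real.exp (-y * Real.cosh ζ) * Real.cosh (η * ζ))| ≤ C * Real.exp (-ζ) := by
  obtain ⟨C, hC⟩ := bound_aux (b := (n : ℝ) + |η|) (by positivity) hy
  refine ⟨C, fun ζ hζ => ?_⟩
  have h1 : Real.cosh ζ ^ n ≤ Real.exp ((n:ℝ) * ζ) := by
    calc Real.cosh ζ ^ n ≤ Real.exp ζ ^ n := by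
          apply pow_le_pow_left₀ (Real.cosh_pos ζ).le
          rw [Real.cosh_eq]
          have h := Real.exp_le_exp.2 (by linarith : -ζ ≤ ζ)
          linarith
      _ = Real.exp ((n:ℝ) * ζ) := by rw [← Real.exp_nat_mul]
  have h2 : Real.cosh (η * ζ) ≤ Real.exp (|η| * ζ) := by
    calc Real.cosh (η * ζ) = Real.cosh (|η * ζ|) := (Real.cosh_abs _).symm
      _ ≤ Real.exp (|η * ζ|) := by
          rw [Real.cosh_eq]
          have := Real.exp_le_exp.2 (neg_le_self (abs_nonneg (η*ζ)))
          linarith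
      _ = Real.exp (|η| * ζ) := by rw [abs_mul, abs_of_nonneg hζ]
  have hcp : (0:ℝ) < Real.cosh ζ ^ n := pow_pos (Real.cosh_pos ζ) n
  rw [abs_of_nonneg (by positivity)]
  calc Real.cosh ζ ^ n * (Real.exp (-y * Real.cosh ζ) * Real.cosh (η * ζ))
      ≤ Real.exp ((n:ℝ)*ζ) * (Real.exp (-y * Real.cosh ζ) * Real.exp (|η| * ζ)) := by
        apply mul_le_mul h1 _ (by positivity) (Real.exp_pos _).le
        exact mul_le_mul_of_nonneg_left h2 (Real.exp_pos _).le
    _ = Real.exp (((n:ℝ) + |η|) * ζ) * Real.exp (-y * Real.cosh ζ) := by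
        rw [← Real.exp_add, ← Real.exp_add]; ring_nf
        rw [← Real.exp_add]; ring_nf
    _ ≤ C * Real.exp (-ζ) := hC ζ hζ

lemma integrable_aux (η : ℝ) (n : ℕ) {y : ℝ} (hy : 0 < y) :
    IntegrableOn (fun ζ => Real.cosh ζ ^ n * (Real.exp (-y * Real.cosh ζ) * Real.cosh (η * ζ)))
      (Set.Ioi (0:ℝ)) := by
  obtain ⟨C, hC⟩ := pointwise_bound η n hy
  have hint : IntegrableOn (fun ζ => C * Real.exp (-ζ)) (Set.Ioi (0:ℝ)) := by
    have := (exp_neg_integrableOn_Ioi (0:ℝ) (one_pos)).const_mul C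
    simp at this; exact this
  apply Integrable.mono hint
  · apply Continuous.aestronglyMeasurable
    continuity
  · filter_upwards [ae_restrict_mem measurableSet_Ioi] with ζ hζ
    rw [Real.norm_eq_abs, Real.norm_eq_abs]
    refine le_trans (hC ζ (le_of_lt hζ)) (le_abs_self _)

lemma hasDerivAt_besselI (η : ℝ) (n : ℕ) {y : ℝ} (hy : 0 < y) :
    HasDerivAt (fun x => besselI η x n) (-(besselI η y (n+1))) y := by
  have key := _root_.hasDerivAt_integral_of_dominated_loc_of_deriv_le
    (μ := volume.restrict (Set.Ioi (0:ℝ)))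
    (F := fun x ζ => Real.cosh ζ ^ n * (Real.exp (-x * Real.cosh ζ) * Real.cosh (η * ζ)))
    (F' := fun x ζ => -(Real.cosh ζ ^ (n+1) * (Real.exp (-x * Real.cosh ζ) * Real.cosh (η * ζ))))
    (x₀ := y)
    (bound := fun ζ => Real.cosh ζ ^ (n+1) * (Real.exp (-(y/2) * Real.cosh ζ) * Real.cosh (η * ζ)))
    (s := Metric.ball y (y/2)) (Metric.ball_mem_nhds y (by positivity))
    ?_ (integrable_aux η n hy) ?_ ?_ ?_ ?_
  · have : (∫ ζ in Set.Ioi (0:ℝ),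
        -(Real.cosh ζ ^ (n+1) * (Real.exp (-y * Real.cosh ζ) * Real.cosh (η * ζ))))
        = -(besselI η y (n+1)) := by
      rw [MeasureTheory.integral_neg]; rfl
    rw [this] at key
    exact key.2
  · filter_upwards with x
    apply Continuous.aestronglyMeasurable; continuity
  · apply Continuous.aestronglyMeasurable; continuity
  · filter_upwards [ae_restrict_mem measurableSet_Ioi] with ζ hζ
    intro x hx
    rw [Metric.mem_ball, Real.dist_eq, abs_lt] at hx
    rw [norm_neg, Real.norm_eq_abs, abs_of_nonneg (by positivity)]
    have hc : (0:ℝ) ≤ Real.cosh ζ ^ (n+1) := (pow_pos (Real.cosh_pos ζ) _).le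
    have he : Real.exp (-x * Real.cosh ζ) ≤ Real.exp (-(y/2) * Real.cosh ζ) := by
      apply Real.exp_le_exp.2
      have := (Real.cosh_pos ζ).le
      nlinarith
    have hch : 0 ≤ Real.cosh (η * ζ) := (Real.cosh_pos _).le
    exact mul_le_mul_of_nonneg_left (mul_le_mul_of_nonneg_right he hch) hc
  · exact integrable_aux η (n+1) (by positivity)
  · filter_upwards with ζ
    intro x hx
    have h : HasDerivAt (fun x : ℝ => Real.exp (-x * Real.cosh ζ))
        (-Real.cosh ζ * Real.exp (-x * Real.cosh ζ)) x := by
      have h1 : HasDerivAt (fun x : ℝ => -x * Real.cosh ζ) (-Real.cosh ζ) x := by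
        simpa using (hasDerivAt_id x).neg.mul_const (Real.cosh ζ)
      simpa [mul_comm, Function.comp_def] using (Real.hasDerivAt_exp (-x * Real.cosh ζ)).comp x h1
    have := ((h.mul_const (Real.cosh (η * ζ))).const_mul (Real.cosh ζ ^ n))
    apply this.congr_deriv
    ring

lemma bessel_ODE (η : ℝ) {y : ℝ} (hy : 0 < y) :
    y^2 * besselI η y 2 - y * besselI η y 1 - (y^2 + η^2) * besselI η y 0 = 0 := by
  set f : ℝ → ℝ := fun ζ =>
    Real.exp (-y * Real.cosh ζ) * (-η * Real.sinh (η * ζ) - y * Real.sinh ζ * Real.cosh (η * ζ))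
    with hf
  set f' : ℝ → ℝ := fun ζ =>
    Real.exp (-y * Real.cosh ζ) *
      ((y^2 * (Real.cosh ζ ^ 2 - 1) - y * Real.cosh ζ - η^2) * Real.cosh (η * ζ)) with hf'
  have hderiv : ∀ ζ : ℝ, HasDerivAt f (f' ζ) ζ := by
    intro ζ
    have h1 : HasDerivAt (fun ζ : ℝ => Real.exp (-y * Real.cosh ζ))
        (-y * Real.sinh ζ * Real.exp (-y * Real.cosh ζ)) ζ := by
      have ha : HasDerivAt (fun ζ : ℝ => -y * Real.cosh ζ) (-y * Real.sinh ζ) ζ :=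
        (Real.hasDerivAt_cosh ζ).const_mul (-y)
      simpa [mul_comm, Function.comp_def] using (Real.hasDerivAt_exp (-y * Real.cosh ζ)).comp ζ ha
    have h2 : HasDerivAt (fun ζ : ℝ => -η * Real.sinh (η * ζ) - y * Real.sinh ζ * Real.cosh (η * ζ))
        (-η * (η * Real.cosh (η * ζ)) -
          (y * Real.cosh ζ * Real.cosh (η * ζ) + y * Real.sinh ζ * (η * Real.sinh (η * ζ)))) ζ := by
      have hs : HasDerivAt (fun ζ : ℝ => Real.sinh (η * ζ)) (η * Real.cosh (η * ζ)) ζ := by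
        have := (Real.hasDerivAt_sinh (η * ζ)).comp ζ ((hasDerivAt_id ζ).const_mul η)
        simpa [mul_comm, Function.comp_def] using this
      have hc : HasDerivAt (fun ζ : ℝ => Real.cosh (η * ζ)) (η * Real.sinh (η * ζ)) ζ := by
        have := (Real.hasDerivAt_cosh (η * ζ)).comp ζ ((hasDerivAt_id ζ).const_mul η)
        simpa [mul_comm, Function.comp_def] using this
      have hy1 : HasDerivAt (fun ζ : ℝ => y * Real.sinh ζ) (y * Real.cosh ζ) ζ :=
        (Real.hasDerivAt_sinh ζ).const_mul y
      exact (hs.const_mul (-η)).sub ((hy1.mul hc).congr_deriv (by ring))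
    have := h1.mul h2
    rw [hf']
    apply this.congr_deriv
    beta_reduce
    have hid : Real.cosh ζ ^ 2 - 1 = Real.sinh ζ ^ 2 := by
      have := Real.cosh_sq_sub_sinh_sq ζ
      linarith
    rw [hid]; ring
  have sinh_abs_le : ∀ x : ℝ, |Real.sinh x| ≤ Real.exp |x| := by
    intro x
    rw [Real.abs_sinh]
    have h1 : Real.sinh |x| ≤ Real.cosh |x| := by
      rw [Real.sinh_eq, Real.cosh_eq]
      have := (Real.exp_pos (-|x|)).le
      linarith
    have h2 : Real.cosh |x| ≤ Real.exp |x| := by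
      rw [Real.cosh_eq]
      have := Real.exp_le_exp.2 (neg_le_self (abs_nonneg x))
      linarith
    linarith
  have cosh_le : ∀ x : ℝ, Real.cosh x ≤ Real.exp |x| := by
    intro x
    rw [← Real.cosh_abs, Real.cosh_eq]
    have := Real.exp_le_exp.2 (neg_le_self (abs_nonneg x))
    linarith
  have hbd : ∃ C : ℝ, 0 ≤ C ∧ ∀ ζ : ℝ, 0 ≤ ζ → |f ζ| ≤ C * Real.exp (-ζ) := by
    obtain ⟨C, hC⟩ := bound_aux (b := 1 + |η|) (by positivity) hy
    have hC0 : 0 ≤ C := by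
      have := hC 0 le_rfl
      simp at this
      linarith [Real.exp_pos (-y)]
    refine ⟨(|η| + y) * C, by positivity, fun ζ hζ => ?_⟩
    have hE : (1:ℝ) ≤ Real.exp ζ := Real.one_le_exp hζ
    have e1 : |Real.sinh (η * ζ)| ≤ Real.exp (|η| * ζ) := by
      have := sinh_abs_le (η * ζ)
      rwa [abs_mul, abs_of_nonneg hζ] at this
    have e2 : Real.cosh (η * ζ) ≤ Real.exp (|η| * ζ) := by
      have := cosh_le (η * ζ)
      rwa [abs_mul, abs_of_nonneg hζ] at this
    have e3 : |Real.sinh ζ| ≤ Real.exp ζ := by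
      have := sinh_abs_le ζ
      rwa [abs_of_nonneg hζ] at this
    have key : |f ζ| ≤ (|η| + y) * (Real.exp ((1 + |η|) * ζ) * Real.exp (-y * Real.cosh ζ)) := by
      rw [hf]
      simp only []
      rw [abs_mul, Real.abs_exp]
      have habs : |(-η * Real.sinh (η * ζ) - y * Real.sinh ζ * Real.cosh (η * ζ))|
          ≤ (|η| + y) * Real.exp ((1 + |η|) * ζ) := by
        have t1 : |(-η * Real.sinh (η * ζ))| ≤ |η| * Real.exp (|η| * ζ) := by
          rw [abs_mul, abs_neg]
          exact mul_le_mul_of_nonneg_left e1 (abs_nonneg η)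
        have t2 : |y * Real.sinh ζ * Real.cosh (η * ζ)| ≤ y * Real.exp ζ * Real.exp (|η| * ζ) := by
          rw [abs_mul, abs_mul, abs_of_nonneg hy.le,
            abs_of_nonneg (Real.cosh_pos _).le]
          have := mul_le_mul (mul_le_mul_of_nonneg_left e3 hy.le) e2
            (Real.cosh_pos _).le (by positivity)
          exact this
        have t3 : |(-η * Real.sinh (η * ζ) - y * Real.sinh ζ * Real.cosh (η * ζ))|
            ≤ |(-η * Real.sinh (η * ζ))| + |y * Real.sinh ζ * Real.cosh (η * ζ)| :=
          abs_sub _ _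
        have hEexp : Real.exp (|η| * ζ) ≤ Real.exp ((1 + |η|) * ζ) :=
          Real.exp_le_exp.2 (by nlinarith)
        have hEexp2 : Real.exp ζ * Real.exp (|η| * ζ) = Real.exp ((1 + |η|) * ζ) := by
          rw [← Real.exp_add]; ring_nf
        nlinarith [Real.exp_pos ((1 + |η|) * ζ), Real.exp_pos (|η| * ζ), abs_nonneg η]
      calc Real.exp (-y * Real.cosh ζ) * |(-η * Real.sinh (η * ζ) - y * Real.sinh ζ * Real.cosh (η * ζ))|
          ≤ Real.exp (-y * Real.cosh ζ) * ((|η| + y) * Real.exp ((1 + |η|) * ζ)) :=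
            mul_le_mul_of_nonneg_left habs (Real.exp_pos _).le
        _ = (|η| + y) * (Real.exp ((1 + |η|) * ζ) * Real.exp (-y * Real.cosh ζ)) := by ring
    calc |f ζ| ≤ (|η| + y) * (Real.exp ((1 + |η|) * ζ) * Real.exp (-y * Real.cosh ζ)) := key
      _ ≤ (|η| + y) * (C * Real.exp (-ζ)) := by
          apply mul_le_mul_of_nonneg_left (hC ζ hζ) (by positivity)
      _ = (|η| + y) * C * Real.exp (-ζ) := by ring
  obtain ⟨C, hC0, hC⟩ := hbd
  have htend : Tendsto f atTop (𝓝 0) := by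
    have hg : Tendsto (fun ζ : ℝ => C * Real.exp (-ζ)) atTop (𝓝 0) := by
      have h : Tendsto (fun ζ : ℝ => Real.exp (-ζ)) atTop (𝓝 0) := by
        simpa using Real.tendsto_exp_neg_atTop_nhds_zero
      simpa using h.const_mul C
    refine squeeze_zero_norm' ?_ hg
    filter_upwards [eventually_ge_atTop (0:ℝ)] with ζ hζ
    simpa using hC ζ hζ
  have hf0 : f 0 = 0 := by simp [hf]
  have hfint : IntegrableOn f' (Set.Ioi (0:ℝ)) := by
    have h2 := (integrable_aux η 2 hy).const_mul (y^2)
    have h1 := (integrable_aux η 1 hy).const_mul y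
    have h0 := (integrable_aux η 0 hy).const_mul (y^2 + η^2)
    have := (h2.sub h1).sub h0
    apply this.congr
    filter_upwards with ζ
    simp only [Pi.sub_apply, hf']
    ring
  have hFTC : ∫ ζ in Set.Ioi (0:ℝ), f' ζ = 0 - f 0 :=
    integral_Ioi_of_hasDerivAt_of_tendsto' (fun x _ => hderiv x) hfint htend
  rw [hf0, sub_zero] at hFTC
  have hsplit : ∫ ζ in Set.Ioi (0:ℝ), f' ζ
      = y^2 * besselI η y 2 - y * besselI η y 1 - (y^2 + η^2) * besselI η y 0 := by
    have e : ∀ ζ : ℝ, f' ζ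
        = y^2 * (Real.cosh ζ ^ 2 * (Real.exp (-y * Real.cosh ζ) * Real.cosh (η * ζ)))
          - y * (Real.cosh ζ ^ 1 * (Real.exp (-y * Real.cosh ζ) * Real.cosh (η * ζ)))
          - (y^2 + η^2) * (Real.cosh ζ ^ 0 * (Real.exp (-y * Real.cosh ζ) * Real.cosh (η * ζ))) := by
      intro ζ; simp only [hf']; ring
    rw [MeasureTheory.integral_congr_ae (Filter.Eventually.of_forall e)]
    rw [MeasureTheory.integral_sub, MeasureTheory.integral_sub,
      MeasureTheory.integral_const_mul, MeasureTheory.integral_const_mul,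
      MeasureTheory.integral_const_mul]
    · rfl
    · exact (integrable_aux η 2 hy).const_mul _
    · exact (integrable_aux η 1 hy).const_mul _
    · exact ((integrable_aux η 2 hy).const_mul _).sub ((integrable_aux η 1 hy).const_mul _)
    · exact (integrable_aux η 0 hy).const_mul _
  rw [← hsplit, hFTC]

lemma besselK_eq (η : ℝ) : besselK η = fun y => besselI η y 0 := by
  funext y
  simp [besselK, besselI]

lemma phim_pos {m t : ℝ} (hm : 0 ≤ m) (ht : 0 < t) : 0 < phim m t := by
  have : (0:ℝ) < t ^ (m+1) := Real.rpow_pos_of_pos ht _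
  have h1 : (0:ℝ) < m + 1 := by linarith
  exact div_pos this h1

lemma hasDerivAt_phim {m t : ℝ} (hm : 0 ≤ m) (ht : 0 < t) :
    HasDerivAt (phim m) (t ^ m) t := by
  have h : HasDerivAt (fun t : ℝ => t ^ (m+1)) ((m+1) * t ^ (m+1-1)) t :=
    Real.hasDerivAt_rpow_const (Or.inl ht.ne')
  have h2 := h.div_const (m+1)
  have hm1 : m + 1 ≠ 0 := by linarith
  have : (m+1) * t ^ (m+1-1) / (m+1) = t ^ m := by
    rw [show m + 1 - 1 = m by ring]
    field_simp
  rw [this] at h2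
  exact h2

section rhoderiv

variable (μ m : ℝ)

noncomputable def Pfun (t : ℝ) : ℝ :=
  ((μ+1)/2) * t ^ ((μ+1)/2 - 1) * besselI ((μ-1)/(2*(m+1))) (phim m t) 0
    - t ^ ((μ+1)/2 + m) * besselI ((μ-1)/(2*(m+1))) (phim m t) 1

noncomputable def Qfun (t : ℝ) : ℝ :=
  ((μ+1)/2) * ((μ+1)/2 - 1) * t ^ ((μ+1)/2 - 2) * besselI ((μ-1)/(2*(m+1))) (phim m t) 0
    - (2*((μ+1)/2) + m) * t ^ ((μ+1)/2 + m - 1) * besselI ((μ-1)/(2*(m+1))) (phim m t) 1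
    + t ^ ((μ+1)/2 + 2*m) * besselI ((μ-1)/(2*(m+1))) (phim m t) 2

lemma hasDerivAt_comp_phim (hm : 0 ≤ m) {t : ℝ} (ht : 0 < t) (η : ℝ) (n : ℕ) :
    HasDerivAt (fun t => besselI η (phim m t) n)
      (-(besselI η (phim m t) (n+1)) * t ^ m) t := by
  have hK := hasDerivAt_besselI η n (phim_pos hm ht)
  exact hK.comp t (hasDerivAt_phim hm ht)

lemma hasDerivAt_rho (hm : 0 ≤ m) {t : ℝ} (ht : 0 < t) :
    HasDerivAt (rho μ m) (Pfun μ m t) t := by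
  set a : ℝ := (μ+1)/2 with ha
  set η : ℝ := (μ-1)/(2*(m+1)) with hη
  have h1 : HasDerivAt (fun t : ℝ => t ^ a) (a * t ^ (a-1)) t :=
    Real.hasDerivAt_rpow_const (Or.inl ht.ne')
  have h2 := hasDerivAt_comp_phim m hm ht η 0
  have hmul := h1.mul h2
  have heq : rho μ m = fun t => t ^ a * besselI η (phim m t) 0 := by
    funext s
    rw [rho, besselK_eq]
  rw [heq]
  refine hmul.congr_deriv ?_
  symm
  rw [Pfun]
  simp only [← ha, ← hη, zero_add]
  have hpow : t ^ a * t ^ m = t ^ (a + m) := (Real.rpow_add ht a m).symm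
  linear_combination (besselI η (phim m t) 1) * hpow

lemma hasDerivAt_Pfun (hm : 0 ≤ m) {t : ℝ} (ht : 0 < t) :
    HasDerivAt (Pfun μ m) (Qfun μ m t) t := by
  set a : ℝ := (μ+1)/2 with ha
  set η : ℝ := (μ-1)/(2*(m+1)) with hη
  have h1 : HasDerivAt (fun t : ℝ => t ^ (a-1)) ((a-1) * t ^ (a-1-1)) t :=
    Real.hasDerivAt_rpow_const (Or.inl ht.ne')
  have h5 : HasDerivAt (fun t : ℝ => t ^ (a+m)) ((a+m) * t ^ (a+m-1)) t :=
    Real.hasDerivAt_rpow_const (Or.inl ht.ne')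
  have h2 := hasDerivAt_comp_phim m hm ht η 0
  have h3 := hasDerivAt_comp_phim m hm ht η 1
  have hmul1 := ((h1.const_mul a).mul h2)
  have hmul2 := (h5.mul h3)
  have := hmul1.sub hmul2
  have heq : Pfun μ m = fun t => a * t ^ (a-1) * besselI η (phim m t) 0
      - t ^ (a+m) * besselI η (phim m t) 1 := by
    funext s; rw [Pfun]
  rw [heq]
  refine this.congr_deriv ?_
  symm
  rw [Qfun]
  have hp1 : t ^ (a-1) * t ^ m = t ^ (a+m-1) := by
    rw [← Real.rpow_add ht]; ring_nf
  have hp2 : t ^ (a+m) * t ^ m = t ^ (a+2*m) := by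
    rw [← Real.rpow_add ht]; ring_nf
  have hp3 : t ^ (a-1-1) = t ^ (a-2) := by ring_nf
  simp only [← ha, ← hη, zero_add, one_add_one_eq_two]
  linear_combination (-(a*(a-1)*besselI η (phim m t) 0)) * hp3
    + (a * besselI η (phim m t) 1) * hp1 - (besselI η (phim m t) 2) * hp2

end rhoderiv

theorem stmt8 (μ m : ℝ) (hμ : 0 ≤ μ) (hm : 0 ≤ m) :
    (∀ t ∈ Set.Ici (1:ℝ), DifferentiableAt ℝ (rho μ m) t ∧
      DifferentiableAt ℝ (deriv (rho μ m)) t) ∧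
    ∀ t ≥ (1:ℝ),
      deriv (deriv (rho μ m)) t - t ^ (2 * m) * rho μ m t -
        deriv (fun s => (μ / s) * rho μ m s) t = 0 := by
  have hm1 : (0:ℝ) < m + 1 := by linarith
  have hev : ∀ t : ℝ, 0 < t → deriv (rho μ m) =ᶠ[𝓝 t] Pfun μ m := by
    intro t ht
    filter_upwards [isOpen_Ioi.mem_nhds (show t ∈ Set.Ioi (0:ℝ) from ht)] with s hs
    exact (hasDerivAt_rho μ m hm hs).deriv
  constructor
  · intro t ht1
    have ht : 0 < t := lt_of_lt_of_le one_pos ht1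
    refine ⟨(hasDerivAt_rho μ m hm ht).differentiableAt, ?_⟩
    exact ((hev t ht).differentiableAt_iff).2 (hasDerivAt_Pfun μ m hm ht).differentiableAt
  · intro t ht1
    have ht : 0 < t := lt_of_lt_of_le one_pos ht1
    have hdd : deriv (deriv (rho μ m)) t = Qfun μ m t := by
      rw [(hev t ht).deriv_eq]
      exact (hasDerivAt_Pfun μ m hm ht).deriv
    have hterm : deriv (fun s => (μ / s) * rho μ m s) t
        = -(μ/t^2) * rho μ m t + (μ/t) * Pfun μ m t := by
      have hinv : HasDerivAt (fun s : ℝ => μ / s) (-(μ/t^2)) t := by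
        simp only [div_eq_mul_inv]
        have h := (hasDerivAt_inv ht.ne').const_mul μ
        rw [show -(μ * (t^2)⁻¹) = μ * -(t^2)⁻¹ from by ring]
        exact h
      have := hinv.mul (hasDerivAt_rho μ m hm ht)
      exact this.deriv
    rw [hdd, hterm]
    -- now pure algebra
    have hy : 0 < phim m t := phim_pos hm ht
    have bessel := bessel_ODE ((μ-1)/(2*(m+1))) hy
    rw [Qfun, Pfun, show rho μ m = fun t => t ^ ((μ+1)/2) * besselI ((μ-1)/(2*(m+1))) (phim m t) 0
      from by funext s; rw [rho, besselK_eq]]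
    set y : ℝ := phim m t with hyy
    set I0 : ℝ := besselI ((μ-1)/(2*(m+1))) y 0 with hI0
    set I1 : ℝ := besselI ((μ-1)/(2*(m+1))) y 1 with hI1
    set I2 : ℝ := besselI ((μ-1)/(2*(m+1))) y 2 with hI2
    simp only []
    have e8 : t ^ (m+1) = (m+1) * y := by
      rw [hyy, phim]; field_simp
    have e1 : t ^ ((μ+1)/2 - 1) = t ^ ((μ+1)/2 - 2) * t := by
      rw [← Real.rpow_add_one ht.ne']; ring_nf
    have e2 : t ^ ((μ+1)/2) = t ^ ((μ+1)/2 - 2) * t * t := by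
      rw [← e1, ← Real.rpow_add_one ht.ne']; ring_nf
    have e5 : t ^ ((μ+1)/2 + m - 1) = t ^ ((μ+1)/2 - 2) * ((m+1) * y) := by
      rw [← e8, ← Real.rpow_add ht]; ring_nf
    have e4 : t ^ ((μ+1)/2 + m) = t ^ ((μ+1)/2 - 2) * t * ((m+1) * y) := by
      rw [← e8, ← e1, ← Real.rpow_add ht]; ring_nf
    have e6 : t ^ ((μ+1)/2 + 2*m) = t ^ ((μ+1)/2 - 2) * ((m+1) * y) * ((m+1) * y) := by
      rw [← e8, ← Real.rpow_add ht, ← Real.rpow_add ht]; ring_nf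
    have e7 : t ^ (2*m) * (t * t) = ((m+1) * y) * ((m+1) * y) := by
      rw [← e8, ← Real.rpow_add ht,
        show t ^ (2*m) * (t*t) = t ^ (2*m) * t * t from by ring,
        ← Real.rpow_add_one ht.ne', ← Real.rpow_add_one ht.ne']
      ring_nf
    have e7' : t ^ (2*m) = ((m+1) * y) * ((m+1) * y) / (t * t) := by
      rw [eq_div_iff (by positivity)]
      exact e7
    rw [e1, e2, e4, e5, e6, e7']
    set A : ℝ := t ^ ((μ+1)/2 - 2) with hA
    field_simp at bessel ⊢
    linear_combination A * bessel
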